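/- Let d ≥ 2, 1 ≤ p < ∞, s ∈ (0,1] with ps > 1, and let Ω = {(x', x_d) : x_d > ζ(x')} be a Lipschitz hypograph with ‖∇ζ‖_∞ ≤ L. Define G_ζ u(x', x_d) = u(x', x_d + ζ(x')) for (x', x_d) ∈ ℝ^d_+. Then there exist σ ∈ (0,1] and a constant C, both depending only on L, d, p, s, such that for every measurable u on Ω: ‖G_ζ u‖_{L^p(ℝ^d_+)} = ‖u‖_{L^p(Ω)} and ∫_{ℝ^d_+} ∫_{B(x, σ x_d)} |G_ζ u(y) - G_ζ u(x)|^p / (σ x_d)^{d+ps} dy dx ≤ C ∫_Ω ∫_{B(x, δ(x))} |u(y) - u(x)|^p / δ(x)^{d+ps} dy dx, where δ(x) = dist(x, ∂Ω). -/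

import Mathlib

open MeasureTheory
open scoped ENNReal NNReal

lemma my_le_infDist {α : Type*} [PseudoMetricSpace α] {s : Set α} (hs : s.Nonempty)
    {x : α} {b : ℝ} (h : ∀ y ∈ s, b ≤ dist x y) : b ≤ Metric.infDist x s := by
  rcases le_or_gt b 0 with hb | hb
  · exact hb.trans Metric.infDist_nonneg
  · have h1 : ENNReal.ofReal b ≤ Metric.infEDist x s := by
      rw [EMetric.le_infEdist]
      intro y hy
      rw [edist_dist]
      exact ENNReal.ofReal_le_ofReal (h y hy)
    have h2 := Metric.infEdist_ne_top (x := x) hs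
    rw [Metric.infDist]
    exact (ENNReal.ofReal_le_iff_le_toReal h2).mp h1

noncomputable def shearHomeo (n : ℕ) (ζ : EuclideanSpace ℝ (Fin n) → ℝ) (hζ : Continuous ζ) :
    (EuclideanSpace ℝ (Fin n) × ℝ) ≃ₜ (EuclideanSpace ℝ (Fin n) × ℝ) where
  toFun q := (q.1, q.2 + ζ q.1)
  invFun q := (q.1, q.2 - ζ q.1)
  left_inv q := by simp
  right_inv q := by simp
  continuous_toFun := continuous_fst.prodMk (continuous_snd.add (hζ.comp continuous_fst))
  continuous_invFun := continuous_fst.prodMk (continuous_snd.sub (hζ.comp continuous_fst))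

theorem stmt_15 (n : ℕ) (hn : 1 ≤ n) (p s : ℝ) (hp : 1 ≤ p) (hs0 : 0 < s)
    (hs1 : s ≤ 1) (hsp : 1 < p * s)
    (ζ : EuclideanSpace ℝ (Fin n) → ℝ) (L : NNReal) (hζ : LipschitzWith L ζ) :
    ∃ σ C : ℝ, 0 < σ ∧ σ ≤ 1 ∧ 0 < C ∧
      ∀ u : EuclideanSpace ℝ (Fin n) × ℝ → ℝ, Measurable u →
        (∫⁻ q in {q : EuclideanSpace ℝ (Fin n) × ℝ | 0 < q.2},
            ENNReal.ofReal (|u (q.1, q.2 + ζ q.1)| ^ p)) =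
          (∫⁻ q in {q : EuclideanSpace ℝ (Fin n) × ℝ | ζ q.1 < q.2},
            ENNReal.ofReal (|u q| ^ p)) ∧
        (∫⁻ x in {q : EuclideanSpace ℝ (Fin n) × ℝ | 0 < q.2},
            ∫⁻ y in Metric.ball x (σ * x.2),
              ENNReal.ofReal
                (|u (y.1, y.2 + ζ y.1) - u (x.1, x.2 + ζ x.1)| ^ p /
                  (σ * x.2) ^ ((n : ℝ) + 1 + p * s))) ≤
          ENNReal.ofReal C *
            ∫⁻ x in {q : EuclideanSpace ℝ (Fin n) × ℝ | ζ q.1 < q.2},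
              ∫⁻ y in Metric.ball x
                  (Metric.infDist x
                    (frontier {q : EuclideanSpace ℝ (Fin n) × ℝ | ζ q.1 < q.2})),
                ENNReal.ofReal
                  (|u y - u x| ^ p /
                    (Metric.infDist x
                        (frontier {q : EuclideanSpace ℝ (Fin n) × ℝ | ζ q.1 < q.2})) ^
                      ((n : ℝ) + 1 + p * s)) := by
  classical
  have hℓ0 : (0:ℝ) ≤ (L:ℝ) := L.coe_nonneg
  set K : ℝ := 1 + (L:ℝ) with hKdef
  have hK1 : (1:ℝ) ≤ K := by simp [hKdef]
  have hK0 : (0:ℝ) < K := by linarith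
  have hK2 : (0:ℝ) < K ^ 2 := pow_pos hK0 2
  have hK2inv : (0:ℝ) < (K ^ 2)⁻¹ := inv_pos.mpr hK2
  set e : ℝ := (n:ℝ) + 1 + p * s with hedef
  have he0 : (0:ℝ) < e := by
    have : (0:ℝ) ≤ (n:ℝ) := Nat.cast_nonneg n
    simp only [hedef]; linarith
  have hBpos : (0:ℝ) < (K ^ 2) ^ e := Real.rpow_pos_of_pos hK2 e
  refine ⟨(K ^ 2)⁻¹, (K ^ 2) ^ e, hK2inv, ?_, hBpos, ?_⟩
  · have h1 : (1:ℝ) ≤ K ^ 2 := by nlinarith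
    exact inv_le_one_of_one_le₀ h1
  intro u hu
  set Ω : Set (EuclideanSpace ℝ (Fin n) × ℝ) := {q | ζ q.1 < q.2} with hΩdef
  have hΩopen : IsOpen Ω := isOpen_lt (hζ.continuous.comp continuous_fst) continuous_snd
  -- the shear map
  have hmp : MeasurePreserving
      (fun q : EuclideanSpace ℝ (Fin n) × ℝ => (q.1, q.2 + ζ q.1)) volume volume :=
    (MeasurePreserving.id volume).skew_product (g := fun a t => t + ζ a)
      (by exact measurable_snd.add (hζ.continuous.measurable.comp measurable_fst))
      (Filter.Eventually.of_forall fun a => (measurePreserving_add_right volume (ζ a)).map_eq)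
  have hemb : MeasurableEmbedding
      (fun q : EuclideanSpace ℝ (Fin n) × ℝ => (q.1, q.2 + ζ q.1)) :=
    (shearHomeo n ζ hζ.continuous).toMeasurableEquiv.measurableEmbedding
  have hset : (fun q : EuclideanSpace ℝ (Fin n) × ℝ => (q.1, q.2 + ζ q.1)) ⁻¹' Ω
      = {q : EuclideanSpace ℝ (Fin n) × ℝ | 0 < q.2} := by
    ext q
    simp only [hΩdef, Set.mem_preimage, Set.mem_setOf_eq]
    exact lt_add_iff_pos_left _
  -- geometry of the frontier
  have hgraph : ∀ a : EuclideanSpace ℝ (Fin n), ((a, ζ a) : _ × ℝ) ∈ frontier Ω := by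
    intro a
    rw [hΩopen.frontier_eq]
    refine ⟨?_, by simp [hΩdef]⟩
    rw [Metric.mem_closure_iff]
    intro ε hε
    refine ⟨(a, ζ a + ε / 2), ?_, ?_⟩
    · show ζ a < ζ a + ε / 2; linarith
    · rw [Prod.dist_eq]
      apply max_lt
      · simpa using hε
      · rw [Real.dist_eq]
        show |ζ a - (ζ a + ε / 2)| < ε
        rw [show ζ a - (ζ a + ε / 2) = -(ε / 2) by ring, abs_neg, abs_of_pos (by linarith)]
        linarith
  have hfrne : (frontier Ω).Nonempty := ⟨(0, ζ 0), hgraph 0⟩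
  have hfr_graph : ∀ z ∈ frontier Ω, z.2 = ζ z.1 := by
    have hcl : closure Ω ⊆ {q : EuclideanSpace ℝ (Fin n) × ℝ | ζ q.1 ≤ q.2} :=
      closure_minimal (fun q hq => show ζ q.1 ≤ q.2 from le_of_lt hq)
        (isClosed_le (hζ.continuous.comp continuous_fst) continuous_snd)
    intro z hz
    rw [hΩopen.frontier_eq] at hz
    have h1 : ζ z.1 ≤ z.2 := hcl hz.1
    have h2 : z.2 ≤ ζ z.1 := not_lt.mp hz.2
    linarith
  -- Lipschitz bound for the shear
  have hlip : ∀ x y : EuclideanSpace ℝ (Fin n) × ℝ,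
      dist ((y.1, y.2 + ζ y.1) : _ × ℝ) ((x.1, x.2 + ζ x.1)) ≤ K * dist y x := by
    intro x y
    rw [Prod.dist_eq]
    have hd1 : dist y.1 x.1 ≤ dist y x := by rw [Prod.dist_eq]; exact le_max_left _ _
    have hd2 : dist y.2 x.2 ≤ dist y x := by rw [Prod.dist_eq]; exact le_max_right _ _
    have hdn : (0:ℝ) ≤ dist y x := dist_nonneg
    apply max_le
    · calc dist y.1 x.1 ≤ dist y x := hd1
        _ ≤ K * dist y x := le_mul_of_one_le_left hdn hK1
    · have h1 : dist (y.2 + ζ y.1) (x.2 + ζ x.1) ≤ dist y.2 x.2 + dist (ζ y.1) (ζ x.1) := by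
        rw [Real.dist_eq, Real.dist_eq, Real.dist_eq]
        have h : y.2 + ζ y.1 - (x.2 + ζ x.1) = (y.2 - x.2) + (ζ y.1 - ζ x.1) := by ring
        rw [h]; exact abs_add_le _ _
      have h2 : dist (ζ y.1) (ζ x.1) ≤ (L:ℝ) * dist y.1 x.1 := hζ.dist_le_mul _ _
      have hd0 : (0:ℝ) ≤ dist y.1 x.1 := dist_nonneg
      calc dist (y.2 + ζ y.1) (x.2 + ζ x.1) ≤ dist y.2 x.2 + (L:ℝ) * dist y.1 x.1 := by linarith
        _ ≤ K * dist y x := by rw [hKdef]; nlinarith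
  -- lower and upper bounds on the distance to the frontier
  have hδup : ∀ x : EuclideanSpace ℝ (Fin n) × ℝ, 0 < x.2 →
      Metric.infDist ((x.1, x.2 + ζ x.1) : _ × ℝ) (frontier Ω) ≤ x.2 := by
    intro x hx
    have h := Metric.infDist_le_dist_of_mem (x := ((x.1, x.2 + ζ x.1) : _ × ℝ)) (hgraph x.1)
    have hd : dist ((x.1, x.2 + ζ x.1) : _ × ℝ) ((x.1, ζ x.1)) = x.2 := by
      rw [Prod.dist_eq]
      simp only [dist_self, Real.dist_eq]
      rw [show x.2 + ζ x.1 - ζ x.1 = x.2 by ring, abs_of_pos hx]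
      exact max_eq_right hx.le
    rwa [hd] at h
  have hδlow : ∀ x : EuclideanSpace ℝ (Fin n) × ℝ, 0 < x.2 →
      x.2 / K ≤ Metric.infDist ((x.1, x.2 + ζ x.1) : _ × ℝ) (frontier Ω) := by
    intro x hx
    apply my_le_infDist hfrne
    intro z hz
    have hz2 : z.2 = ζ z.1 := hfr_graph z hz
    rw [Prod.dist_eq]
    rcases le_or_gt (x.2 / K) (dist x.1 z.1) with hc | hc
    · exact hc.trans (le_max_left _ _)
    · refine le_trans ?_ (le_max_right _ _)
      rw [Real.dist_eq, hz2]
      have hL : |ζ x.1 - ζ z.1| ≤ (L:ℝ) * dist x.1 z.1 := by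
        have := hζ.dist_le_mul x.1 z.1
        rwa [Real.dist_eq] at this
      have h5 : -((L:ℝ) * dist x.1 z.1) ≤ ζ x.1 - ζ z.1 := neg_le_of_abs_le hL
      have hxK : x.2 / K * K = x.2 := div_mul_cancel₀ _ hK0.ne'
      have hkey : x.2 / K ≤ x.2 + ζ x.1 - ζ z.1 := by
        have hd0 : (0:ℝ) ≤ dist x.1 z.1 := dist_nonneg
        have hq : x.2 / K ≥ 0 := le_of_lt (div_pos hx hK0)
        nlinarith [hc.le, hℓ0]
      calc x.2 / K ≤ x.2 + ζ x.1 - ζ z.1 := hkey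
        _ ≤ |x.2 + ζ x.1 - ζ z.1| := le_abs_self _
  -- image of small balls
  have himg : ∀ x : EuclideanSpace ℝ (Fin n) × ℝ, 0 < x.2 →
      (fun q : EuclideanSpace ℝ (Fin n) × ℝ => (q.1, q.2 + ζ q.1)) ''
        Metric.ball x ((K ^ 2)⁻¹ * x.2) ⊆
      Metric.ball ((x.1, x.2 + ζ x.1) : _ × ℝ)
        (Metric.infDist ((x.1, x.2 + ζ x.1) : _ × ℝ) (frontier Ω)) := by
    intro x hx Y hY
    rcases hY with ⟨y, hy, rfl⟩
    rw [Metric.mem_ball]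
    calc dist ((y.1, y.2 + ζ y.1) : _ × ℝ) ((x.1, x.2 + ζ x.1)) ≤ K * dist y x := hlip x y
      _ < K * ((K ^ 2)⁻¹ * x.2) := by
          exact mul_lt_mul_of_pos_left (Metric.mem_ball.mp hy) hK0
      _ = x.2 / K := by field_simp
      _ ≤ _ := hδlow x hx
  constructor
  · rw [← hset]
    exact hmp.setLIntegral_comp_preimage_emb hemb (fun q => ENNReal.ofReal (|u q| ^ p)) Ω
  · have key : ∀ x : EuclideanSpace ℝ (Fin n) × ℝ,
        (∫⁻ y in Metric.ball x ((K ^ 2)⁻¹ * x.2),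
          ENNReal.ofReal
            (|u (y.1, y.2 + ζ y.1) - u (x.1, x.2 + ζ x.1)| ^ p /
              ((K ^ 2)⁻¹ * x.2) ^ e)) ≤
        ENNReal.ofReal ((K ^ 2) ^ e) *
          ∫⁻ Y in Metric.ball ((x.1, x.2 + ζ x.1) : _ × ℝ)
              (Metric.infDist ((x.1, x.2 + ζ x.1) : _ × ℝ) (frontier Ω)),
            ENNReal.ofReal
              (|u Y - u (x.1, x.2 + ζ x.1)| ^ p /
                Metric.infDist ((x.1, x.2 + ζ x.1) : _ × ℝ) (frontier Ω) ^ e) := by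
      intro x
      rcases le_or_gt x.2 0 with hx | hx
      · have hball : Metric.ball x ((K ^ 2)⁻¹ * x.2) = ∅ :=
          Metric.ball_eq_empty.mpr (mul_nonpos_of_nonneg_of_nonpos hK2inv.le hx)
        rw [hball, Measure.restrict_empty, lintegral_zero_measure]
        exact zero_le
      · set δx : ℝ := Metric.infDist ((x.1, x.2 + ζ x.1) : _ × ℝ) (frontier Ω) with hδdef
        have hup : δx ≤ x.2 := hδup x hx
        have hlow : x.2 / K ≤ δx := hδlow x hx
        have hδpos : 0 < δx := lt_of_lt_of_le (div_pos hx hK0) hlow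
        have hδepos : (0:ℝ) < δx ^ e := Real.rpow_pos_of_pos hδpos e
        have realineq : ∀ y : EuclideanSpace ℝ (Fin n) × ℝ,
            |u (y.1, y.2 + ζ y.1) - u (x.1, x.2 + ζ x.1)| ^ p / ((K ^ 2)⁻¹ * x.2) ^ e ≤
            (K ^ 2) ^ e * (|u (y.1, y.2 + ζ y.1) - u (x.1, x.2 + ζ x.1)| ^ p / δx ^ e) := by
          intro y
          set A : ℝ := |u (y.1, y.2 + ζ y.1) - u (x.1, x.2 + ζ x.1)| ^ p with hAdef
          have hA : 0 ≤ A := Real.rpow_nonneg (abs_nonneg _) p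
          have hs1 : (0:ℝ) < (K ^ 2)⁻¹ * δx := mul_pos hK2inv hδpos
          have h3 : ((K ^ 2)⁻¹ * δx) ^ e ≤ ((K ^ 2)⁻¹ * x.2) ^ e :=
            Real.rpow_le_rpow hs1.le (mul_le_mul_of_nonneg_left hup hK2inv.le) he0.le
          have h4 : A / ((K ^ 2)⁻¹ * x.2) ^ e ≤ A / ((K ^ 2)⁻¹ * δx) ^ e :=
            div_le_div_of_nonneg_left hA (Real.rpow_pos_of_pos hs1 e) h3
          have h5 : ((K ^ 2)⁻¹ * δx) ^ e = ((K ^ 2) ^ e)⁻¹ * δx ^ e := by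
            rw [Real.mul_rpow hK2inv.le hδpos.le, Real.inv_rpow hK2.le]
          have h6 : A / (((K ^ 2) ^ e)⁻¹ * δx ^ e) = (K ^ 2) ^ e * (A / δx ^ e) := by
            field_simp
          rw [h5, h6] at h4
          exact h4
        calc (∫⁻ y in Metric.ball x ((K ^ 2)⁻¹ * x.2),
              ENNReal.ofReal
                (|u (y.1, y.2 + ζ y.1) - u (x.1, x.2 + ζ x.1)| ^ p /
                  ((K ^ 2)⁻¹ * x.2) ^ e))
            ≤ ∫⁻ y in Metric.ball x ((K ^ 2)⁻¹ * x.2),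
              ENNReal.ofReal ((K ^ 2) ^ e *
                (|u (y.1, y.2 + ζ y.1) - u (x.1, x.2 + ζ x.1)| ^ p / δx ^ e)) :=
              lintegral_mono fun y => ENNReal.ofReal_le_ofReal (realineq y)
          _ = ENNReal.ofReal ((K ^ 2) ^ e) *
              ∫⁻ y in Metric.ball x ((K ^ 2)⁻¹ * x.2),
                ENNReal.ofReal
                  (|u (y.1, y.2 + ζ y.1) - u (x.1, x.2 + ζ x.1)| ^ p / δx ^ e) := by
              simp_rw [ENNReal.ofReal_mul hBpos.le]
              exact lintegral_const_mul' _ _ ENNReal.ofReal_ne_top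
          _ = ENNReal.ofReal ((K ^ 2) ^ e) *
              ∫⁻ Y in (fun q : EuclideanSpace ℝ (Fin n) × ℝ => (q.1, q.2 + ζ q.1)) ''
                  Metric.ball x ((K ^ 2)⁻¹ * x.2),
                ENNReal.ofReal (|u Y - u (x.1, x.2 + ζ x.1)| ^ p / δx ^ e) := by
              rw [hmp.setLIntegral_comp_emb hemb
                (fun Y => ENNReal.ofReal (|u Y - u (x.1, x.2 + ζ x.1)| ^ p / δx ^ e)) _]
          _ ≤ ENNReal.ofReal ((K ^ 2) ^ e) *
              ∫⁻ Y in Metric.ball ((x.1, x.2 + ζ x.1) : _ × ℝ) δx,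
                ENNReal.ofReal (|u Y - u (x.1, x.2 + ζ x.1)| ^ p / δx ^ e) :=
              mul_le_mul_right (lintegral_mono_set (himg x hx)) _
    calc (∫⁻ x in {q : EuclideanSpace ℝ (Fin n) × ℝ | 0 < q.2},
          ∫⁻ y in Metric.ball x ((K ^ 2)⁻¹ * x.2),
            ENNReal.ofReal
              (|u (y.1, y.2 + ζ y.1) - u (x.1, x.2 + ζ x.1)| ^ p /
                ((K ^ 2)⁻¹ * x.2) ^ e))
        ≤ ∫⁻ x in {q : EuclideanSpace ℝ (Fin n) × ℝ | 0 < q.2},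
            ENNReal.ofReal ((K ^ 2) ^ e) *
              ∫⁻ Y in Metric.ball ((x.1, x.2 + ζ x.1) : _ × ℝ)
                  (Metric.infDist ((x.1, x.2 + ζ x.1) : _ × ℝ) (frontier Ω)),
                ENNReal.ofReal
                  (|u Y - u (x.1, x.2 + ζ x.1)| ^ p /
                    Metric.infDist ((x.1, x.2 + ζ x.1) : _ × ℝ) (frontier Ω) ^ e) :=
          lintegral_mono key
      _ = ∫⁻ X in Ω, ENNReal.ofReal ((K ^ 2) ^ e) *
            ∫⁻ Y in Metric.ball X (Metric.infDist X (frontier Ω)),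
              ENNReal.ofReal (|u Y - u X| ^ p / Metric.infDist X (frontier Ω) ^ e) := by
          rw [← hset]
          exact hmp.setLIntegral_comp_preimage_emb hemb
            (fun X => ENNReal.ofReal ((K ^ 2) ^ e) *
              ∫⁻ Y in Metric.ball X (Metric.infDist X (frontier Ω)),
                ENNReal.ofReal (|u Y - u X| ^ p / Metric.infDist X (frontier Ω) ^ e)) Ω
      _ = ENNReal.ofReal ((K ^ 2) ^ e) *
            ∫⁻ X in Ω, ∫⁻ Y in Metric.ball X (Metric.infDist X (frontier Ω)),
              ENNReal.ofReal (|u Y - u X| ^ p / Metric.infDist X (frontier Ω) ^ e) :=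
          lintegral_const_mul' _ _ ENNReal.ofReal_ne_top
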